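/- Let A := ℂ[X, Y, Z] be the polynomial ring in three variables and let D_1 := Z ∂/∂X + ∂/∂Y and D_2 := ∂/∂Y. Then D_1 and D_2 are commuting locally nilpotent ℂ-derivations of A, linearly independent over A; their common kernel A^{D_1, D_2} = {a ∈ A : D_1(a) = D_2(a) = 0} equals the ℂ-subalgebra ℂ[Z]; and for α ∈ ℂ, the derivations D_1, D_2 are linearly independent modulo (Z − α) if and only if α ≠ 0. -/

import Mathlib

/-- A derivation is locally nilpotent if every element is killed by some iterate. -/
def Derivation.IsLocallyNilpotent {k A : Type*} [CommRing k] [CommRing A] [Algebra k A]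
    (D : Derivation k A A) : Prop :=
  ∀ a : A, ∃ m : ℕ, 1 ≤ m ∧ (fun x => D x)^[m] a = 0

open MvPolynomial


section helpers

variable {A : Type*} [CommRing A] [Algebra ℂ A]

lemma iter_zero (D : Derivation ℂ A A) (m : ℕ) : (fun x => D x)^[m] (0 : A) = 0 := by
  induction m with
  | zero => simp
  | succ n ih => rw [Function.iterate_succ_apply, map_zero]; exact ih

lemma iter_add (D : Derivation ℂ A A) (m : ℕ) (a b : A) :
    (fun x => D x)^[m] (a + b) = (fun x => D x)^[m] a + (fun x => D x)^[m] b := by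
  induction m generalizing a b with
  | zero => simp
  | succ n ih => rw [Function.iterate_succ_apply, map_add]; exact ih _ _

lemma iter_pad (D : Derivation ℂ A A) {m m' : ℕ} (h : m ≤ m') {a : A}
    (ha : (fun x => D x)^[m] a = 0) : (fun x => D x)^[m'] a = 0 := by
  obtain ⟨k, rfl⟩ := Nat.exists_eq_add_of_le h
  rw [Nat.add_comm, Function.iterate_add_apply, ha, iter_zero]

lemma iter_mul_zero (D : Derivation ℂ A A) :
    ∀ N m n : ℕ, ∀ a b : A, m + n ≤ N →
      (fun x => D x)^[m] a = 0 → (fun x => D x)^[n] b = 0 →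
      (fun x => D x)^[m + n] (a * b) = 0 := by
  intro N
  induction N with
  | zero =>
    intro m n a b hmn ha hb
    have hm : m = 0 := by omega
    have hn : n = 0 := by omega
    subst hm; subst hn
    simp only [Function.iterate_zero, id_eq] at ha hb ⊢
    rw [ha, zero_mul]; simp
  | succ N ih =>
    intro m n a b hmn ha hb
    match m, n with
    | 0, n =>
      simp only [Function.iterate_zero, id_eq] at ha
      rw [ha, zero_mul, iter_zero]
    | m, 0 =>
      simp only [Function.iterate_zero, id_eq] at hb
      rw [hb, mul_zero, iter_zero]
    | m' + 1, n' + 1 =>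
      have harith : m' + 1 + (n' + 1) = (m' + 1 + n') + 1 := by omega
      rw [harith, Function.iterate_succ_apply]
      have hleib : D (a * b) = a * D b + b * D a := by
        rw [D.leibniz]; simp [smul_eq_mul]
      rw [hleib, iter_add]
      have h1 : (fun x => D x)^[m' + 1 + n'] (a * D b) = 0 := by
        apply ih (m' + 1) n' a (D b) (by omega) ha
        rw [← Function.iterate_succ_apply]; exact hb
      have h2 : (fun x => D x)^[n' + 1 + m'] (b * D a) = 0 := by
        apply ih (n' + 1) m' b (D a) (by omega) hb
        rw [← Function.iterate_succ_apply]; exact ha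
      rw [h1]
      rw [show m' + 1 + n' = n' + 1 + m' by omega, h2, add_zero]

end helpers

lemma locnil_of_gens (D : Derivation ℂ (MvPolynomial (Fin 3) ℂ) (MvPolynomial (Fin 3) ℂ))
    (hX : ∀ i : Fin 3, D (D (X i)) = 0) : D.IsLocallyNilpotent := by
  intro a
  induction a using MvPolynomial.induction_on with
  | C c =>
    exact ⟨1, le_refl _, by simp [MvPolynomial.derivation_C]⟩
  | add p q hp hq =>
    obtain ⟨m, hm1, hm⟩ := hp
    obtain ⟨n, hn1, hn⟩ := hq
    exact ⟨max m n, le_trans hm1 (le_max_left _ _), by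
      rw [iter_add, iter_pad D (le_max_left m n) hm, iter_pad D (le_max_right m n) hn, add_zero]⟩
  | mul_X p i hp =>
    obtain ⟨m, hm1, hm⟩ := hp
    refine ⟨m + 2, by omega, ?_⟩
    apply iter_mul_zero D (m + 2) m 2 p (X i) le_rfl hm
    show D (D (X i)) = 0
    exact hX i


lemma coeff_pderiv' (i : Fin 3) (f : MvPolynomial (Fin 3) ℂ) (m : Fin 3 →₀ ℕ) :
    coeff m (pderiv i f) = ((m i : ℂ) + 1) * coeff (m + Finsupp.single i 1) f := by
  induction f using MvPolynomial.induction_on' with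
  | monomial s a =>
    rw [pderiv_monomial, coeff_monomial, coeff_monomial]
    by_cases h : s = m + Finsupp.single i 1
    · subst h
      have h1 : m + Finsupp.single i 1 - Finsupp.single i 1 = m := by
        ext j; simp [Finsupp.single_apply]
      have h2 : ((m + Finsupp.single i 1 : Fin 3 →₀ ℕ) i : ℂ) = (m i : ℂ) + 1 := by
        rw [Finsupp.add_apply, Finsupp.single_apply, if_pos rfl]; push_cast; ring
      rw [if_pos h1, if_pos rfl, h2]; ring
    · rw [if_neg h, mul_zero]
      by_cases h2 : s - Finsupp.single i 1 = m
      · rw [if_pos h2]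
        have hsi : s i = 0 := by
          by_contra hsi
          apply h
          rw [← h2, tsub_add_cancel_of_le]
          rw [Finsupp.single_le_iff]; omega
        have : ((s i : ℕ) : ℂ) = 0 := by rw [hsi]; simp
        rw [this, mul_zero]
      · rw [if_neg h2]
  | add p q hp hq =>
    rw [map_add, coeff_add, coeff_add, hp, hq]; ring

lemma support_of_pderiv_eq_zero {i : Fin 3} {f : MvPolynomial (Fin 3) ℂ}
    (h : pderiv i f = 0) {d : Fin 3 →₀ ℕ} (hd : d ∈ f.support) : d i = 0 := by
  by_contra hdi
  have hle : Finsupp.single i 1 ≤ d := by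
    rw [Finsupp.single_le_iff]; omega
  have key := coeff_pderiv' i f (d - Finsupp.single i 1)
  rw [h, coeff_zero, tsub_add_cancel_of_le hle] at key
  have hne : (((d - Finsupp.single i 1 : Fin 3 →₀ ℕ) i : ℂ) + 1) ≠ 0 := by
    have : (((d - Finsupp.single i 1 : Fin 3 →₀ ℕ) i : ℂ)) = ((d i - 1 : ℕ) : ℂ) := by
      rw [Finsupp.tsub_apply, Finsupp.single_apply, if_pos rfl]
    rw [this]
    intro hc
    have : ((d i - 1 : ℕ) : ℂ) + 1 = (((d i - 1) + 1 : ℕ) : ℂ) := by push_cast; ring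
    rw [this] at hc
    exact (Nat.cast_ne_zero.mpr (Nat.succ_ne_zero _)) hc
  have : coeff d f = 0 := (mul_eq_zero.mp key.symm).resolve_left hne
  exact (MvPolynomial.mem_support_iff.mp hd) this

lemma pderiv_pderiv_comm' {i j : Fin 3} (f : MvPolynomial (Fin 3) ℂ) :
    pderiv i (pderiv j f) = pderiv j (pderiv i f) := by
  apply MvPolynomial.ext
  intro m
  rw [coeff_pderiv', coeff_pderiv', coeff_pderiv', coeff_pderiv']
  by_cases h : i = j
  · subst h; ring_nf
  · have h1 : m + Finsupp.single i 1 + Finsupp.single j 1 =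
        m + Finsupp.single j 1 + Finsupp.single i 1 := by
      ext k; simp only [Finsupp.add_apply]; ring
    have h2 : ((m + Finsupp.single j 1 : Fin 3 →₀ ℕ) i : ℂ) = (m i : ℂ) := by
      rw [Finsupp.add_apply, Finsupp.single_apply, if_neg (Ne.symm h)]; simp
    have h3 : ((m + Finsupp.single i 1 : Fin 3 →₀ ℕ) j : ℂ) = (m j : ℂ) := by
      rw [Finsupp.add_apply, Finsupp.single_apply, if_neg h]; simp
    rw [h1, h2, h3]; ring



open MvPolynomial in
theorem statement16
    (D1 D2 : Derivation ℂ (MvPolynomial (Fin 3) ℂ) (MvPolynomial (Fin 3) ℂ))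
    (hD1 : D1 = (X 2 : MvPolynomial (Fin 3) ℂ) • pderiv (0 : Fin 3) + pderiv (1 : Fin 3))
    (hD2 : D2 = pderiv (1 : Fin 3)) :
    (∀ a, D1 (D2 a) = D2 (D1 a)) ∧
    D1.IsLocallyNilpotent ∧ D2.IsLocallyNilpotent ∧
    (∀ a1 a2 : MvPolynomial (Fin 3) ℂ,
      (∀ w, a1 * D1 w + a2 * D2 w = 0) → a1 = 0 ∧ a2 = 0) ∧
    ({a : MvPolynomial (Fin 3) ℂ | D1 a = 0 ∧ D2 a = 0} =
      (Algebra.adjoin ℂ {(X 2 : MvPolynomial (Fin 3) ℂ)} :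
        Subalgebra ℂ (MvPolynomial (Fin 3) ℂ))) ∧
    (∀ α : ℂ,
      (∀ a1 a2 : MvPolynomial (Fin 3) ℂ,
        (∀ w, a1 * D1 w + a2 * D2 w ∈
          Ideal.span {(X 2 : MvPolynomial (Fin 3) ℂ) - algebraMap ℂ (MvPolynomial (Fin 3) ℂ) α}) →
        a1 ∈ Ideal.span {(X 2 : MvPolynomial (Fin 3) ℂ) - algebraMap ℂ (MvPolynomial (Fin 3) ℂ) α} ∧
        a2 ∈ Ideal.span {(X 2 : MvPolynomial (Fin 3) ℂ) - algebraMap ℂ (MvPolynomial (Fin 3) ℂ) α})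
      ↔ α ≠ 0) := by
  subst hD1 hD2
  have hD1w : ∀ w, (((X 2 : MvPolynomial (Fin 3) ℂ) • pderiv (0 : Fin 3) + pderiv (1 : Fin 3) :
        Derivation ℂ (MvPolynomial (Fin 3) ℂ) (MvPolynomial (Fin 3) ℂ)) w)
      = X 2 * pderiv 0 w + pderiv 1 w := by
    intro w
    rw [Derivation.add_apply, Derivation.smul_apply, smul_eq_mul]
  refine ⟨?_, ?_, ?_, ?_, ?_, ?_⟩
  · -- commuting
    intro a
    rw [hD1w ((pderiv 1) a), hD1w a, map_add, pderiv_mul,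
      pderiv_X_of_ne (show (2:Fin 3) ≠ 1 by decide), zero_mul, zero_add,
      pderiv_pderiv_comm' a]
  · -- D1 loc nilpotent
    apply locnil_of_gens
    intro i
    fin_cases i <;>
      simp [hD1w, pderiv_X_of_ne, pderiv_X_self, pderiv_mul, Fin.isValue,
        pderiv_X_of_ne (show (2:Fin 3) ≠ 0 by decide), pderiv_X_of_ne (show (2:Fin 3) ≠ 1 by decide),
        pderiv_X_of_ne (show (0:Fin 3) ≠ 1 by decide), pderiv_X_of_ne (show (1:Fin 3) ≠ 0 by decide)]
  · -- D2 loc nilpotent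
    apply locnil_of_gens
    intro i
    fin_cases i <;>
      simp [pderiv_X_of_ne (show (0:Fin 3) ≠ 1 by decide),
        pderiv_X_of_ne (show (2:Fin 3) ≠ 1 by decide)]
  · -- linear independence
    intro a1 a2 h
    have h0 := h (X 0)
    rw [hD1w] at h0
    rw [pderiv_X_self, pderiv_X_of_ne (by decide)] at h0
    have ha1 : a1 = 0 := by
      have : a1 * X 2 = 0 := by
        rw [mul_one] at h0; rw [mul_zero, add_zero] at h0; linear_combination h0
      rcases mul_eq_zero.mp this with h' | h'
      · exact h'
      · exact absurd h' (MvPolynomial.X_ne_zero 2)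
    have h1 := h (X 1)
    rw [hD1w] at h1
    rw [pderiv_X_self, pderiv_X_of_ne (show (1:Fin 3) ≠ 0 by decide)] at h1
    have ha2 : a2 = 0 := by
      rw [ha1] at h1
      simpa using h1
    exact ⟨ha1, ha2⟩
  · -- kernel
    ext a
    simp only [Set.mem_setOf_eq, SetLike.mem_coe]
    constructor
    · rintro ⟨h1, h2⟩
      rw [hD1w] at h1
      change pderiv 1 a = 0 at h2
      rw [h2, add_zero] at h1
      have h0 : pderiv 0 a = 0 := by
        rcases mul_eq_zero.mp h1 with h' | h'
        · exact absurd h' (MvPolynomial.X_ne_zero 2)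
        · exact h'
      have : a ∈ supported ℂ ({2} : Set (Fin 3)) := by
        rw [mem_supported]
        intro i hi
        rw [Finset.mem_coe, MvPolynomial.mem_vars] at hi
        obtain ⟨d, hd, hid⟩ := hi
        rw [Finsupp.mem_support_iff] at hid
        have e0 := support_of_pderiv_eq_zero h0 hd
        have e1 := support_of_pderiv_eq_zero h2 hd
        fin_cases i
        · exact absurd e0 hid
        · exact absurd e1 hid
        · exact Set.mem_singleton _
      rwa [supported_eq_adjoin_X, Set.image_singleton] at this
    · intro ha
      have key : pderiv (0 : Fin 3) a = 0 ∧ pderiv (1 : Fin 3) a = 0 := by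
        induction ha using Algebra.adjoin_induction with
        | mem x hx =>
          rw [Set.mem_singleton_iff] at hx
          subst hx
          exact ⟨pderiv_X_of_ne (by decide), pderiv_X_of_ne (by decide)⟩
        | algebraMap r => constructor <;> simp [algebraMap_eq, pderiv_C]
        | add x y hx hy ihx ihy =>
          exact ⟨by rw [map_add, ihx.1, ihy.1, add_zero], by rw [map_add, ihx.2, ihy.2, add_zero]⟩
        | mul x y hx hy ihx ihy =>
          exact ⟨by rw [pderiv_mul, ihx.1, ihy.1, zero_mul, mul_zero, add_zero],
                 by rw [pderiv_mul, ihx.2, ihy.2, zero_mul, mul_zero, add_zero]⟩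
      exact ⟨by rw [hD1w, key.1, key.2, mul_zero, add_zero], key.2⟩
  · -- modulo ideal
    intro α
    constructor
    · intro hP hα
      subst hα
      have hmem : ∀ w, (1 : MvPolynomial (Fin 3) ℂ) * (((X 2 : MvPolynomial (Fin 3) ℂ) • pderiv (0 : Fin 3) + pderiv (1 : Fin 3) : Derivation ℂ (MvPolynomial (Fin 3) ℂ) (MvPolynomial (Fin 3) ℂ)) w) + (-1) * pderiv 1 w ∈
          Ideal.span {(X 2 : MvPolynomial (Fin 3) ℂ) - algebraMap ℂ (MvPolynomial (Fin 3) ℂ) 0} := by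
        intro w
        rw [hD1w]
        have : (1 : MvPolynomial (Fin 3) ℂ) * (X 2 * pderiv 0 w + pderiv 1 w) + (-1) * pderiv 1 w
            = X 2 * pderiv 0 w := by ring
        rw [this, map_zero, sub_zero]
        exact Ideal.mem_span_singleton.mpr (dvd_mul_right _ _)
      have h1 := (hP 1 (-1) hmem).1
      rw [map_zero, sub_zero, Ideal.mem_span_singleton] at h1
      obtain ⟨q, hq⟩ := h1
      have := congrArg constantCoeff hq
      simp [constantCoeff_X] at this
    · intro hα a1 a2 h
      set z : MvPolynomial (Fin 3) ℂ := X 2 - algebraMap ℂ (MvPolynomial (Fin 3) ℂ) α with hz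
      have hzmem : z ∈ Ideal.span {z} := Ideal.mem_span_singleton_self z
      have h0 := h (X 0)
      simp only [hD1w, pderiv_X_self, pderiv_X_of_ne (show (0:Fin 3) ≠ 1 by decide),
        mul_one, mul_zero, add_zero] at h0
      -- h0 : a1 * X 2 ∈ span {z}
      have hCα : a1 * algebraMap ℂ (MvPolynomial (Fin 3) ℂ) α ∈ Ideal.span {z} := by
        have : a1 * algebraMap ℂ (MvPolynomial (Fin 3) ℂ) α = a1 * X 2 - a1 * z := by
          rw [hz]; ring
        rw [this]
        exact Ideal.sub_mem _ h0 (Ideal.mul_mem_left _ _ hzmem)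
      have ha1 : a1 ∈ Ideal.span {z} := by
        have : a1 = algebraMap ℂ (MvPolynomial (Fin 3) ℂ) α⁻¹ * (a1 * algebraMap ℂ (MvPolynomial (Fin 3) ℂ) α) := by
          rw [mul_comm a1, ← mul_assoc, ← map_mul, inv_mul_cancel₀ hα, map_one, one_mul]
        rw [this]
        exact Ideal.mul_mem_left _ _ hCα
      have h1 := h (X 1)
      simp only [hD1w, pderiv_X_self, pderiv_X_of_ne (show (1:Fin 3) ≠ 0 by decide),
        mul_zero, zero_add, mul_one] at h1
      -- h1 : a1 + a2 ∈ span {z}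
      have ha2 : a2 ∈ Ideal.span {z} := by
        have : a2 = (a1 + a2) - a1 := by ring
        rw [this]
        exact Ideal.sub_mem _ h1 ha1
      exact ⟨ha1, ha2⟩
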